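/- Let 𝒢 be the simplicial clique sum (SCS) of G_1 and G_2, and let F be any field. Then wcdim(𝒢, F) = wcdim(G_1, F) + wcdim(G_2, F) − 1. -/

import Mathlib

open Finset

open scoped Classical

/-- The closed neighborhood `N[v]` of a vertex `v`: `v` together with its neighbors. -/
noncomputable def clNbhd {V : Type*} [Fintype V] (G : SimpleGraph V) (v : V) : Finset V :=
  univ.filter (fun u => u = v ∨ G.Adj v u)

/-- The closed neighborhood `N[s]` of a finite set `s` of vertices. -/
noncomputable def clNbhdSet {V : Type*} [Fintype V] (G : SimpleGraph V) (s : Finset V) : Finset V :=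
  s.biUnion (clNbhd G)

/-- A maximal clique of a graph: a clique not properly contained in any other clique. -/
def IsMaxClique {V : Type*} (G : SimpleGraph V) (C : Finset V) : Prop :=
  G.IsClique (C : Set V) ∧ ∀ D : Finset V, G.IsClique (D : Set V) → C ⊆ D → D = C

/-- A vertex is simplicial if its closed neighborhood is a maximal clique. -/
def IsSimplicialVertex {V : Type*} [Fintype V] (G : SimpleGraph V) (v : V) : Prop :=
  IsMaxClique G (clNbhd G v)

/-- A simplicial clique: a maximal clique containing at least one simplicial vertex. -/
def IsSimplicialClique {V : Type*} [Fintype V] (G : SimpleGraph V) (C : Finset V) : Prop :=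
  IsMaxClique G C ∧ ∃ v ∈ C, IsSimplicialVertex G v

/-- The set `C(G)` of simplicial cliques of `G`. -/
noncomputable def simpCliques {V : Type*} [Fintype V] (G : SimpleGraph V) : Finset (Finset V) :=
  univ.filter (fun C => IsSimplicialClique G C)

/-- The simplicial clique number `sc(G) = |C(G)|`. -/
noncomputable def scNum {V : Type*} [Fintype V] (G : SimpleGraph V) : ℕ :=
  (simpCliques G).card

/-- A simplicial clique covered graph (SCCG): `C(G)` is nonempty and the union of the
simplicial cliques is the whole vertex set. -/
def IsSCCG {V : Type*} [Fintype V] (G : SimpleGraph V) : Prop :=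
  (simpCliques G).Nonempty ∧ ∀ v : V, ∃ C ∈ simpCliques G, v ∈ C

/-- The connection set `W` of `G`: vertices belonging to at least two simplicial cliques. -/
noncomputable def connSet {V : Type*} [Fintype V] (G : SimpleGraph V) : Finset V :=
  univ.filter (fun v => 1 < ((simpCliques G).filter (fun C => v ∈ C)).card)

/-- `S(I)`: the set of simplicial cliques not contained in the closed neighborhood `N[I]`. -/
noncomputable def sFam {V : Type*} [Fintype V] (G : SimpleGraph V) (I : Finset V) :
    Finset (Finset V) :=
  (simpCliques G).filter (fun C => ¬ C ⊆ clNbhdSet G I)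

/-- An independent set of vertices: no two of its vertices are adjacent. -/
def IsIndep {V : Type*} (G : SimpleGraph V) (s : Finset V) : Prop :=
  ∀ u ∈ s, ∀ w ∈ s, ¬ G.Adj u w

/-- A maximal independent set: an independent set not properly contained in any
other independent set. -/
def IsMaxIndep {V : Type*} (G : SimpleGraph V) (s : Finset V) : Prop :=
  IsIndep G s ∧ ∀ t : Finset V, IsIndep G t → s ⊆ t → t = s

/-- A well-covered weighting: a weighting whose sum over every maximal independent set
is the same. -/
def IsWCW {V : Type*} (G : SimpleGraph V) {F : Type*} [Field F] (f : V → F) : Prop :=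
  ∀ s t : Finset V, IsMaxIndep G s → IsMaxIndep G t →
    ∑ v ∈ s, f v = ∑ v ∈ t, f v

/-- The well-covered space of `G` over `F`: the `F`-vector space of well-covered
weightings of `G`. -/
noncomputable def wcSpace {V : Type*} (G : SimpleGraph V) (F : Type*) [Field F] :
    Submodule F (V → F) where
  carrier := {f | IsWCW G f}
  zero_mem' := by
    intro s t _ _
    simp
  add_mem' := by
    intro f g hf hg
    simp only [Set.mem_setOf_eq] at hf hg ⊢
    intro s t hs ht
    simp only [Pi.add_apply, Finset.sum_add_distrib]
    rw [hf s t hs ht, hg s t hs ht]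
  smul_mem' := by
    intro c f hf
    simp only [Set.mem_setOf_eq] at hf ⊢
    intro s t hs ht
    simp only [Pi.smul_apply, smul_eq_mul, ← Finset.mul_sum]
    rw [hf s t hs ht]

/-- The well-covered dimension `wcdim(G, F)`. -/
noncomputable def wcdim {V : Type*} (G : SimpleGraph V) (F : Type*) [Field F] : ℕ :=
  Module.finrank F (wcSpace G F)
/-- The finset of vertices of a subgraph `H` that lie in a given set `s` of ambient
vertices, viewed as vertices of `H`. -/
noncomputable def restrictToSub {V : Type*} [Fintype V] {𝒢 : SimpleGraph V}
    (H : 𝒢.Subgraph) (s : Set V) : Finset ↥H.verts :=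
  univ.filter (fun x => (x : V) ∈ s)

/-- `𝒢` is the simplicial clique sum (SCS) of its subgraphs `H₁` and `H₂`:
their simplicial clique sets are nonempty, their vertex sets cover `V(𝒢)`, their edge
sets cover `E(𝒢)`, and `V(H₁) ∩ V(H₂)` is a simplicial clique of `H₁`, of `H₂`, and
of `𝒢`. -/
def IsSCS {V : Type*} [Fintype V] (𝒢 : SimpleGraph V) (H₁ H₂ : 𝒢.Subgraph) : Prop :=
  (simpCliques H₁.coe).Nonempty ∧ (simpCliques H₂.coe).Nonempty ∧
  H₁.verts ∪ H₂.verts = Set.univ ∧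
  H₁.edgeSet ∪ H₂.edgeSet = 𝒢.edgeSet ∧
  IsSimplicialClique H₁.coe (restrictToSub H₁ (H₁.verts ∩ H₂.verts)) ∧
  IsSimplicialClique H₂.coe (restrictToSub H₂ (H₁.verts ∩ H₂.verts)) ∧
  IsSimplicialClique 𝒢 (H₁.verts ∩ H₂.verts).toFinset

/-- A chordal graph: no induced cycles of length at least 4. -/
def IsChordal {V : Type*} (G : SimpleGraph V) : Prop :=
  ∀ n : ℕ, 4 ≤ n → IsEmpty (SimpleGraph.cycleGraph n ↪g G)

set_option linter.unusedSectionVars false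
section Aux
variable {V : Type*} [Fintype V] {G : SimpleGraph V}

lemma mem_clNbhd {v u : V} : u ∈ clNbhd G v ↔ u = v ∨ G.Adj v u := by
  simp [clNbhd]

lemma simpClique_eq_clNbhd {C : Finset V} (hC : IsSimplicialClique G C) :
    ∃ v ∈ C, C = clNbhd G v := by
  obtain ⟨⟨hclique, hmax⟩, v, hvC, hv⟩ := hC
  refine ⟨v, hvC, ?_⟩
  have hsub : C ⊆ clNbhd G v := by
    intro u hu
    rcases eq_or_ne u v with h | h
    · exact mem_clNbhd.2 (Or.inl h)
    · exact mem_clNbhd.2 (Or.inr (hclique hvC hu (Ne.symm h)))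
  exact (hmax _ hv.1 hsub).symm

lemma exists_adj_of_maxIndep {M : Finset V} (hM : IsMaxIndep G M) {v : V} (hv : v ∉ M) :
    ∃ u ∈ M, G.Adj v u := by
  by_contra h
  push_neg at h
  have hind : IsIndep G (insert v M) := by
    intro a ha b hb
    rcases Finset.mem_insert.1 ha with rfl | ha' <;>
      rcases Finset.mem_insert.1 hb with rfl | hb'
    · exact G.irrefl
    · exact h b hb'
    · intro hadj; exact h a ha' hadj.symm
    · exact hM.1 a ha' b hb'
  have := hM.2 _ hind (Finset.subset_insert _ _)
  exact hv (this ▸ Finset.mem_insert_self v M)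

/-- Every maximal independent set meets a simplicial clique in exactly one vertex. -/
lemma maxIndep_inter_simpClique {C M : Finset V} (hC : IsSimplicialClique G C)
    (hM : IsMaxIndep G M) : ∃ x, x ∈ M ∧ x ∈ C ∧ ∀ y ∈ M, y ∈ C → y = x := by
  obtain ⟨v, hvC, hCv⟩ := simpClique_eq_clNbhd hC
  have hne : (M ∩ C).Nonempty := by
    by_contra h
    rw [Finset.not_nonempty_iff_eq_empty] at h
    have hv : v ∉ M := by
      intro hvM
      have : v ∈ M ∩ C := Finset.mem_inter.2 ⟨hvM, hvC⟩
      simp [h] at this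
    obtain ⟨u, huM, hadj⟩ := exists_adj_of_maxIndep hM hv
    have : u ∈ M ∩ C := Finset.mem_inter.2 ⟨huM, hCv ▸ mem_clNbhd.2 (Or.inr hadj)⟩
    simp [h] at this
  obtain ⟨x, hx⟩ := hne
  obtain ⟨hxM, hxC⟩ := Finset.mem_inter.1 hx
  refine ⟨x, hxM, hxC, ?_⟩
  intro y hyM hyC
  by_contra hne'
  have hadj := hC.1.1 hyC hxC hne'
  exact hM.1 y hyM x hxM hadj

lemma exists_maxIndep_containing (s : Finset V) (hs : IsIndep G s) :
    ∃ M, IsMaxIndep G M ∧ s ⊆ M := by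
  classical
  obtain ⟨M, hMmem, hMmax⟩ := Finset.exists_max_image
    ((univ : Finset (Finset V)).filter (fun t => IsIndep G t ∧ s ⊆ t)) Finset.card
    ⟨s, by simp [hs]⟩
  simp only [Finset.mem_filter, Finset.mem_univ, true_and] at hMmem
  refine ⟨M, ⟨hMmem.1, ?_⟩, hMmem.2⟩
  intro t ht hMt
  have htmem : t ∈ (univ : Finset (Finset V)).filter (fun t => IsIndep G t ∧ s ⊆ t) := by
    simp [ht, hMmem.2.trans hMt]
  exact (Finset.eq_of_subset_of_card_le hMt (hMmax t htmem)).symm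

lemma isIndep_singleton (v : V) : IsIndep G ({v} : Finset V) := by
  intro a ha b hb
  simp only [Finset.mem_singleton] at ha hb
  subst ha; subst hb; exact G.irrefl

lemma exists_maxIndep (G : SimpleGraph V) : ∃ M, IsMaxIndep G M := by
  obtain ⟨M, hM, -⟩ := exists_maxIndep_containing (G := G) ∅ (by intro a ha; simp at ha)
  exact ⟨M, hM⟩

end Aux
set_option linter.unusedSectionVars false

section SCS
variable {V : Type*} [Fintype V] {𝒢 : SimpleGraph V} {H₁ H₂ : 𝒢.Subgraph}

lemma mem_restrictToSub {H : 𝒢.Subgraph} {s : Set V} {x : ↥H.verts} :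
    x ∈ restrictToSub H s ↔ (x : V) ∈ s := by simp [restrictToSub]

lemma mem_wcSpace {F : Type*} [Field F] {G : SimpleGraph V} {f : V → F} :
    f ∈ wcSpace G F ↔ IsWCW G f := Iff.rfl

lemma IsSCS.symm (h : IsSCS 𝒢 H₁ H₂) : IsSCS 𝒢 H₂ H₁ := by
  obtain ⟨h1, h2, hcov, hedge, hs1, hs2, hsG⟩ := h
  refine ⟨h2, h1, by rw [Set.union_comm]; exact hcov, by rw [Set.union_comm]; exact hedge,
    by rw [Set.inter_comm]; exact hs2, by rw [Set.inter_comm]; exact hs1,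
    by
      have he : (H₂.verts ∩ H₁.verts).toFinset = (H₁.verts ∩ H₂.verts).toFinset := by
        ext v; simp [and_comm]
      rw [he]; exact hsG⟩

lemma IsSCS.mem_verts_total (h : IsSCS 𝒢 H₁ H₂) (v : V) :
    v ∈ H₁.verts ∨ v ∈ H₂.verts := by
  have := h.2.2.1
  have hv : v ∈ H₁.verts ∪ H₂.verts := by rw [this]; trivial
  exact hv

lemma IsSCS.adj_of_adj (h : IsSCS 𝒢 H₁ H₂) {u w : V} (hu : u ∈ H₁.verts)
    (hw : w ∈ H₁.verts) (hadj : 𝒢.Adj u w) : H₁.Adj u w := by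
  have hedge : s(u, w) ∈ H₁.edgeSet ∪ H₂.edgeSet := by
    rw [h.2.2.2.1]; exact hadj
  rcases hedge with he | he
  · exact he
  · have he' : H₂.Adj u w := he
    have hu2 : u ∈ H₂.verts := he'.fst_mem
    have hw2 : w ∈ H₂.verts := he'.snd_mem
    have hclique := h.2.2.2.2.1.1.1
    have huK : (⟨u, hu⟩ : ↥H₁.verts) ∈ restrictToSub H₁ (H₁.verts ∩ H₂.verts) :=
      mem_restrictToSub.2 ⟨hu, hu2⟩
    have hwK : (⟨w, hw⟩ : ↥H₁.verts) ∈ restrictToSub H₁ (H₁.verts ∩ H₂.verts) :=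
      mem_restrictToSub.2 ⟨hw, hw2⟩
    have hne : (⟨u, hu⟩ : ↥H₁.verts) ≠ ⟨w, hw⟩ := by
      simp only [ne_eq, Subtype.mk.injEq]; exact hadj.ne
    have := hclique (Finset.mem_coe.2 huK) (Finset.mem_coe.2 hwK) hne
    exact this

lemma IsSCS.no_cross (h : IsSCS 𝒢 H₁ H₂) {u w : V} (hu1 : u ∈ H₁.verts)
    (hu2 : u ∉ H₂.verts) (hw2 : w ∈ H₂.verts) (hw1 : w ∉ H₁.verts) : ¬ 𝒢.Adj u w := by
  intro hadj
  have hedge : s(u, w) ∈ H₁.edgeSet ∪ H₂.edgeSet := by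
    rw [h.2.2.2.1]; exact hadj
  rcases hedge with he | he
  · exact hw1 (SimpleGraph.Subgraph.Adj.snd_mem (he : H₁.Adj u w))
  · exact hu2 (SimpleGraph.Subgraph.Adj.fst_mem (he : H₂.Adj u w))

/-- Restriction of a MIS of `𝒢` to `H₁` is a MIS of `H₁.coe`. -/
lemma IsSCS.restrict_maxIndep (h : IsSCS 𝒢 H₁ H₂) {M : Finset V}
    (hM : IsMaxIndep 𝒢 M) : IsMaxIndep H₁.coe (restrictToSub H₁ ↑M) := by
  constructor
  · intro a ha b hb hadj
    exact hM.1 ↑a (by simpa [restrictToSub] using ha) ↑b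
      (by simpa [restrictToSub] using hb) hadj.adj_sub
  · intro t ht hsub
    refine Finset.Subset.antisymm ?_ hsub
    intro x hxt
    rw [mem_restrictToSub]
    by_contra hxM
    have hxM' : (x : V) ∉ M := by simpa using hxM
    obtain ⟨u, huM, hadj⟩ := exists_adj_of_maxIndep hM hxM'
    by_cases hu1 : u ∈ H₁.verts
    · have hH : H₁.Adj ↑x u := h.adj_of_adj x.2 hu1 hadj
      have hut : (⟨u, hu1⟩ : ↥H₁.verts) ∈ t :=
        hsub (mem_restrictToSub.2 (Finset.mem_coe.2 huM))
      exact ht x hxt ⟨u, hu1⟩ hut hH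
    · have hu2 : u ∈ H₂.verts := (h.mem_verts_total u).resolve_left hu1
      have hx2 : (x : V) ∈ H₂.verts := by
        by_contra hx2
        exact h.no_cross x.2 hx2 hu2 hu1 hadj
      obtain ⟨z, hzM, hzK, -⟩ := maxIndep_inter_simpClique h.2.2.2.2.2.2 hM
      rw [Set.mem_toFinset] at hzK
      have hzt : (⟨z, hzK.1⟩ : ↥H₁.verts) ∈ t :=
        hsub (mem_restrictToSub.2 (Finset.mem_coe.2 hzM))
      have hxz : (x : V) ≠ z := by rintro h'; exact hxM' (h' ▸ hzM)
      have hclique := h.2.2.2.2.1.1.1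
      have hxK : x ∈ restrictToSub H₁ (H₁.verts ∩ H₂.verts) :=
        mem_restrictToSub.2 ⟨x.2, hx2⟩
      have hzK' : (⟨z, hzK.1⟩ : ↥H₁.verts) ∈ restrictToSub H₁ (H₁.verts ∩ H₂.verts) :=
        mem_restrictToSub.2 hzK
      have hadj' : H₁.coe.Adj x ⟨z, hzK.1⟩ :=
        hclique (Finset.mem_coe.2 hxK) (Finset.mem_coe.2 hzK')
          (fun hh => hxz (congrArg Subtype.val hh))
      exact ht x hxt _ hzt hadj'

end SCS
section Glue
variable {V : Type*} [Fintype V] {𝒢 : SimpleGraph V} {H₁ H₂ : 𝒢.Subgraph}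

lemma coe_adj_of_adj {H : 𝒢.Subgraph} {a b : ↥H.verts} (h : H.Adj ↑a ↑b) :
    H.coe.Adj a b := h

lemma mem_image_val {H : 𝒢.Subgraph} {M : Finset ↥H.verts} {v : V} :
    v ∈ M.image Subtype.val ↔ ∃ hv : v ∈ H.verts, ⟨v, hv⟩ ∈ M := by
  constructor
  · intro hv
    obtain ⟨a, haM, ha⟩ := Finset.mem_image.1 hv
    exact ⟨ha ▸ a.2, by cases a; cases ha; exact haM⟩
  · rintro ⟨hv, hvM⟩
    exact Finset.mem_image.2 ⟨⟨v, hv⟩, hvM, rfl⟩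

/-- Gluing two MISs that agree on the overlap clique gives a MIS of `𝒢`. -/
lemma IsSCS.glue_maxIndep (h : IsSCS 𝒢 H₁ H₂) {M₁ : Finset ↥H₁.verts}
    {M₂ : Finset ↥H₂.verts} (h₁ : IsMaxIndep H₁.coe M₁) (h₂ : IsMaxIndep H₂.coe M₂)
    {x : V} (hx1 : x ∈ H₁.verts) (hx2 : x ∈ H₂.verts)
    (hxM1 : ⟨x, hx1⟩ ∈ M₁) (hxM2 : ⟨x, hx2⟩ ∈ M₂) :
    IsMaxIndep 𝒢 (M₁.image Subtype.val ∪ M₂.image Subtype.val) ∧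
      (M₁.image Subtype.val : Finset V) ∩ M₂.image Subtype.val = {x} := by
  obtain ⟨y₁, hy₁M, hy₁K, hy₁u⟩ := maxIndep_inter_simpClique h.2.2.2.2.1 h₁
  obtain ⟨y₂, hy₂M, hy₂K, hy₂u⟩ := maxIndep_inter_simpClique h.symm.2.2.2.2.1 h₂
  have uniq1 : ∀ {v : V} (hv : v ∈ H₁.verts), ⟨v, hv⟩ ∈ M₁ → v ∈ H₂.verts → v = x := by
    intro v hv hvM hv2
    have h1 := hy₁u ⟨v, hv⟩ hvM (mem_restrictToSub.2 ⟨hv, hv2⟩)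
    have h2 := hy₁u ⟨x, hx1⟩ hxM1 (mem_restrictToSub.2 ⟨hx1, hx2⟩)
    have := h1.trans h2.symm
    exact congrArg Subtype.val this
  have uniq2 : ∀ {v : V} (hv : v ∈ H₂.verts), ⟨v, hv⟩ ∈ M₂ → v ∈ H₁.verts → v = x := by
    intro v hv hvM hv1
    have h1 := hy₂u ⟨v, hv⟩ hvM (mem_restrictToSub.2 ⟨hv, hv1⟩)
    have h2 := hy₂u ⟨x, hx2⟩ hxM2 (mem_restrictToSub.2 ⟨hx2, hx1⟩)
    exact congrArg Subtype.val (h1.trans h2.symm)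
  have hinter : (M₁.image Subtype.val : Finset V) ∩ M₂.image Subtype.val = {x} := by
    apply Finset.eq_singleton_iff_unique_mem.2
    constructor
    · exact Finset.mem_inter.2 ⟨mem_image_val.2 ⟨hx1, hxM1⟩, mem_image_val.2 ⟨hx2, hxM2⟩⟩
    · intro v hv
      obtain ⟨hv1, hv2⟩ := Finset.mem_inter.1 hv
      obtain ⟨ha, haM⟩ := mem_image_val.1 hv1
      obtain ⟨hb, _⟩ := mem_image_val.1 hv2
      exact uniq1 ha haM hb
  -- no `𝒢`-edge between the two images
  have key : ∀ u ∈ M₁.image Subtype.val, ∀ w ∈ M₂.image Subtype.val, ¬ 𝒢.Adj u w := by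
    intro u hu w hw hadj
    obtain ⟨hu1, huM⟩ := mem_image_val.1 hu
    obtain ⟨hw2, hwM⟩ := mem_image_val.1 hw
    by_cases hu2 : u ∈ H₂.verts
    · have hux : u = x := uniq1 hu1 huM hu2
      subst hux
      have hca : H₂.coe.Adj ⟨u, hx2⟩ ⟨w, hw2⟩ :=
        coe_adj_of_adj (h.symm.adj_of_adj hx2 hw2 hadj)
      exact h₂.1 _ hxM2 _ hwM hca
    · by_cases hw1 : w ∈ H₁.verts
      · have hwx : w = x := uniq2 hw2 hwM hw1
        subst hwx
        have hca : H₁.coe.Adj ⟨u, hu1⟩ ⟨w, hx1⟩ :=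
          coe_adj_of_adj (h.adj_of_adj hu1 hx1 hadj)
        exact h₁.1 _ huM _ hxM1 hca
      · exact h.no_cross hu1 hu2 hw2 hw1 hadj
  refine ⟨⟨?_, ?_⟩, hinter⟩
  · -- independence
    intro u hu w hw hadj
    rcases Finset.mem_union.1 hu with hu' | hu' <;>
      rcases Finset.mem_union.1 hw with hw' | hw'
    · obtain ⟨ha, haM⟩ := mem_image_val.1 hu'
      obtain ⟨hb, hbM⟩ := mem_image_val.1 hw'
      exact h₁.1 _ haM _ hbM (coe_adj_of_adj (h.adj_of_adj ha hb hadj))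
    · exact key u hu' w hw' hadj
    · exact key w hw' u hu' hadj.symm
    · obtain ⟨ha, haM⟩ := mem_image_val.1 hu'
      obtain ⟨hb, hbM⟩ := mem_image_val.1 hw'
      exact h₂.1 _ haM _ hbM (coe_adj_of_adj (h.symm.adj_of_adj ha hb hadj))
  · -- maximality
    intro t ht hsub
    refine Finset.Subset.antisymm ?_ hsub
    intro y hyt
    by_contra hyM
    rcases h.mem_verts_total y with hy1 | hy2
    · have hind : IsIndep H₁.coe (insert ⟨y, hy1⟩ M₁) := by
        intro a ha b hb hadj
        rcases Finset.mem_insert.1 ha with rfl | ha' <;>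
          rcases Finset.mem_insert.1 hb with rfl | hb'
        · exact H₁.coe.irrefl hadj
        · have hbt : (b : V) ∈ t :=
            hsub (Finset.mem_union_left _ (mem_image_val.2 ⟨b.2, by simpa using hb'⟩))
          exact ht y hyt ↑b hbt hadj.adj_sub
        · have hat : (a : V) ∈ t :=
            hsub (Finset.mem_union_left _ (mem_image_val.2 ⟨a.2, by simpa using ha'⟩))
          exact (ht ↑a hat y hyt hadj.adj_sub).elim
        · exact h₁.1 a ha' b hb' hadj
      have heq := h₁.2 _ hind (Finset.subset_insert _ _)
      have hyM1 : (⟨y, hy1⟩ : ↥H₁.verts) ∈ M₁ := heq ▸ Finset.mem_insert_self _ _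
      exact hyM (Finset.mem_union_left _ (mem_image_val.2 ⟨hy1, hyM1⟩))
    · have hind : IsIndep H₂.coe (insert ⟨y, hy2⟩ M₂) := by
        intro a ha b hb hadj
        rcases Finset.mem_insert.1 ha with rfl | ha' <;>
          rcases Finset.mem_insert.1 hb with rfl | hb'
        · exact H₂.coe.irrefl hadj
        · have hbt : (b : V) ∈ t :=
            hsub (Finset.mem_union_right _ (mem_image_val.2 ⟨b.2, by simpa using hb'⟩))
          exact ht y hyt ↑b hbt hadj.adj_sub
        · have hat : (a : V) ∈ t :=
            hsub (Finset.mem_union_right _ (mem_image_val.2 ⟨a.2, by simpa using ha'⟩))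
          exact (ht ↑a hat y hyt hadj.adj_sub).elim
        · exact h₂.1 a ha' b hb' hadj
      have heq := h₂.2 _ hind (Finset.subset_insert _ _)
      have hyM2 : (⟨y, hy2⟩ : ↥H₂.verts) ∈ M₂ := heq ▸ Finset.mem_insert_self _ _
      exact hyM (Finset.mem_union_right _ (mem_image_val.2 ⟨hy2, hyM2⟩))

end Glue
section GlueFun
variable {V : Type*} [Fintype V] {𝒢 : SimpleGraph V}

/-- The glued weighting: off the overlap take the given values, on the overlap their sum. -/
noncomputable def glueFun (H₁ H₂ : 𝒢.Subgraph) {F : Type*} [Field F]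
    (f₁ : ↥H₁.verts → F) (f₂ : ↥H₂.verts → F) : V → F := fun v =>
  (if h : v ∈ H₁.verts then f₁ ⟨v, h⟩ else 0) + (if h : v ∈ H₂.verts then f₂ ⟨v, h⟩ else 0)

lemma sum_dite_restrict (H : 𝒢.Subgraph) {F : Type*} [Field F]
    (f : ↥H.verts → F) (M : Finset V) :
    ∑ v ∈ M, (if h : v ∈ H.verts then f ⟨v, h⟩ else 0) = ∑ x ∈ restrictToSub H ↑M, f x := by
  classical
  rw [← Finset.sum_filter_add_sum_filter_not M (· ∈ H.verts)]
  have h2 : ∑ v ∈ M.filter (fun v => ¬ v ∈ H.verts),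
      (if h : v ∈ H.verts then f ⟨v, h⟩ else 0) = 0 :=
    Finset.sum_eq_zero (fun v hv => dif_neg (Finset.mem_filter.1 hv).2)
  rw [h2, add_zero]
  refine Finset.sum_bij' (fun v hv => (⟨v, (Finset.mem_filter.1 hv).2⟩ : ↥H.verts))
    (fun x _ => (x : V)) ?_ ?_ ?_ ?_ ?_
  · intro v hv
    exact mem_restrictToSub.2 (Finset.mem_coe.2 (Finset.mem_filter.1 hv).1)
  · intro x hx
    exact Finset.mem_filter.2 ⟨Finset.mem_coe.1 (mem_restrictToSub.1 hx), x.2⟩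
  · intro v hv; rfl
  · intro x hx; rfl
  · intro v hv
    exact dif_pos (Finset.mem_filter.1 hv).2

lemma sum_glueFun {F : Type*} [Field F] (H₁ H₂ : 𝒢.Subgraph)
    (f₁ : ↥H₁.verts → F) (f₂ : ↥H₂.verts → F) (M : Finset V) :
    ∑ v ∈ M, glueFun H₁ H₂ f₁ f₂ v =
      ∑ x ∈ restrictToSub H₁ ↑M, f₁ x + ∑ x ∈ restrictToSub H₂ ↑M, f₂ x := by
  unfold glueFun
  rw [Finset.sum_add_distrib, sum_dite_restrict, sum_dite_restrict]

lemma IsSCS.glueFun_isWCW {H₁ H₂ : 𝒢.Subgraph} (h : IsSCS 𝒢 H₁ H₂) {F : Type*} [Field F]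
    {f₁ : ↥H₁.verts → F} {f₂ : ↥H₂.verts → F}
    (hf₁ : IsWCW H₁.coe f₁) (hf₂ : IsWCW H₂.coe f₂) :
    IsWCW 𝒢 (glueFun H₁ H₂ f₁ f₂) := by
  intro s t hs ht
  rw [sum_glueFun, sum_glueFun,
    hf₁ _ _ (h.restrict_maxIndep hs) (h.restrict_maxIndep ht),
    hf₂ _ _ (h.symm.restrict_maxIndep hs) (h.symm.restrict_maxIndep ht)]

/-- The gluing linear map into the ambient function space. -/
noncomputable def psiMap0 (H₁ H₂ : 𝒢.Subgraph) (F : Type*) [Field F] :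
    (wcSpace H₁.coe F × wcSpace H₂.coe F) →ₗ[F] (V → F) where
  toFun p := glueFun H₁ H₂ ↑p.1 ↑p.2
  map_add' p q := by
    funext v
    by_cases h1 : v ∈ H₁.verts <;> by_cases h2 : v ∈ H₂.verts <;>
      simp [glueFun, h1, h2, Prod.fst_add, Prod.snd_add] <;> ring
  map_smul' c p := by
    funext v
    by_cases h1 : v ∈ H₁.verts <;> by_cases h2 : v ∈ H₂.verts <;>
      simp [glueFun, h1, h2, Prod.smul_fst, Prod.smul_snd] <;> ring

/-- The gluing linear map from the product of the well-covered spaces of the parts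
to the well-covered space of the whole graph. -/
noncomputable def psiMap {H₁ H₂ : 𝒢.Subgraph} (h : IsSCS 𝒢 H₁ H₂) (F : Type*) [Field F] :
    (wcSpace H₁.coe F × wcSpace H₂.coe F) →ₗ[F] wcSpace 𝒢 F :=
  LinearMap.codRestrict (wcSpace 𝒢 F) (psiMap0 H₁ H₂ F)
    (fun p => h.glueFun_isWCW p.1.2 p.2.2)

lemma psiMap_coe {H₁ H₂ : 𝒢.Subgraph} (h : IsSCS 𝒢 H₁ H₂) {F : Type*} [Field F]
    (p : wcSpace H₁.coe F × wcSpace H₂.coe F) :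
    (psiMap h F p : V → F) = glueFun H₁ H₂ ↑p.1 ↑p.2 := rfl

end GlueFun
section Surj
variable {V : Type*} [Fintype V] {𝒢 : SimpleGraph V} {H₁ H₂ : 𝒢.Subgraph}

lemma IsSCS.psiMap_surjective (h : IsSCS 𝒢 H₁ H₂) (F : Type*) [Field F] :
    Function.Surjective (psiMap h F) := by
  rintro ⟨g, hg⟩
  have hg' : IsWCW 𝒢 g := hg
  obtain ⟨M₀, hM₀⟩ := exists_maxIndep 𝒢
  have hch1 : ∀ (x : V) (hx : x ∈ H₁.verts ∩ H₂.verts), ∃ N : Finset ↥H₁.verts,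
      IsMaxIndep H₁.coe N ∧ (⟨x, hx.1⟩ : ↥H₁.verts) ∈ N := by
    intro x hx
    obtain ⟨N, hN, hsub⟩ := exists_maxIndep_containing (G := H₁.coe) ({⟨x, hx.1⟩} : Finset ↥H₁.verts)
      (isIndep_singleton _)
    exact ⟨N, hN, hsub (Finset.mem_singleton_self _)⟩
  choose N₁ hN₁ hxN₁ using hch1
  have hch2 : ∀ (x : V) (hx : x ∈ H₁.verts ∩ H₂.verts), ∃ N : Finset ↥H₂.verts,
      IsMaxIndep H₂.coe N ∧ (⟨x, hx.2⟩ : ↥H₂.verts) ∈ N := by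
    intro x hx
    obtain ⟨N, hN, hsub⟩ := exists_maxIndep_containing (G := H₂.coe) ({⟨x, hx.2⟩} : Finset ↥H₂.verts)
      (isIndep_singleton _)
    exact ⟨N, hN, hsub (Finset.mem_singleton_self _)⟩
  choose N₂ hN₂ hxN₂ using hch2
  have claim_glue : ∀ (x : V) (hx : x ∈ H₁.verts ∩ H₂.verts)
      (P₁ : Finset ↥H₁.verts) (P₂ : Finset ↥H₂.verts),
      IsMaxIndep H₁.coe P₁ → IsMaxIndep H₂.coe P₂ →
      (⟨x, hx.1⟩ : ↥H₁.verts) ∈ P₁ → (⟨x, hx.2⟩ : ↥H₂.verts) ∈ P₂ →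
      (∑ v ∈ P₁, g ↑v) + (∑ v ∈ P₂, g ↑v) - g x = ∑ v ∈ M₀, g v := by
    intro x hx P₁ P₂ hP₁ hP₂ hxP₁ hxP₂
    obtain ⟨hMIS, hint⟩ := h.glue_maxIndep hP₁ hP₂ hx.1 hx.2 hxP₁ hxP₂
    have hsum := hg' _ _ hMIS hM₀
    have hui : ∑ v ∈ (P₁.image Subtype.val ∪ P₂.image Subtype.val), g v
        + ∑ v ∈ ((P₁.image Subtype.val : Finset V) ∩ P₂.image Subtype.val), g v
        = ∑ v ∈ P₁.image Subtype.val, g v + ∑ v ∈ P₂.image Subtype.val, g v :=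
      Finset.sum_union_inter
    rw [hint, Finset.sum_singleton] at hui
    have h1 : ∑ v ∈ P₁.image Subtype.val, g v = ∑ v ∈ P₁, g ↑v :=
      Finset.sum_image (fun a _ b _ hab => Subtype.ext hab)
    have h2 : ∑ v ∈ P₂.image Subtype.val, g v = ∑ v ∈ P₂, g ↑v :=
      Finset.sum_image (fun a _ b _ hab => Subtype.ext hab)
    rw [h1, h2] at hui
    linear_combination hsum - hui
  have claim₁ : ∀ (x : V) (hx : x ∈ H₁.verts ∩ H₂.verts) (P₁ : Finset ↥H₁.verts),
      IsMaxIndep H₁.coe P₁ → (⟨x, hx.1⟩ : ↥H₁.verts) ∈ P₁ →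
      ∑ v ∈ P₁, g ↑v = ∑ v ∈ N₁ x hx, g ↑v := by
    intro x hx P₁ hP₁ hxP₁
    have e1 := claim_glue x hx P₁ (N₂ x hx) hP₁ (hN₂ x hx) hxP₁ (hxN₂ x hx)
    have e2 := claim_glue x hx (N₁ x hx) (N₂ x hx) (hN₁ x hx) (hN₂ x hx)
      (hxN₁ x hx) (hxN₂ x hx)
    linear_combination e1 - e2
  have claim₂ : ∀ (x : V) (hx : x ∈ H₁.verts ∩ H₂.verts) (P₂ : Finset ↥H₂.verts),
      IsMaxIndep H₂.coe P₂ → (⟨x, hx.2⟩ : ↥H₂.verts) ∈ P₂ →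
      ∑ v ∈ P₂, g ↑v = (∑ v ∈ M₀, g v) + g x - ∑ v ∈ N₁ x hx, g ↑v := by
    intro x hx P₂ hP₂ hxP₂
    have e1 := claim_glue x hx (N₁ x hx) P₂ (hN₁ x hx) hP₂ (hxN₁ x hx) hxP₂
    linear_combination e1
  have hex1 : ∃ f : ↥H₁.verts → F, f = (fun (u : ↥H₁.verts) =>
      g ↑u - (if h2 : (↑u : V) ∈ H₂.verts then ∑ v ∈ N₁ ↑u ⟨u.2, h2⟩, g ↑v else 0)) := ⟨_, rfl⟩
  obtain ⟨f₁, hf₁def⟩ := hex1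
  have hex2 : ∃ f : ↥H₂.verts → F, f = (fun (u : ↥H₂.verts) =>
      g ↑u + (if h1 : (↑u : V) ∈ H₁.verts then (∑ v ∈ N₁ ↑u ⟨h1, u.2⟩, g ↑v) - g ↑u else 0)) := ⟨_, rfl⟩
  obtain ⟨f₂, hf₂def⟩ := hex2
  have key1 : ∀ P, IsMaxIndep H₁.coe P → ∑ u ∈ P, f₁ u = 0 := by
    intro P hP
    obtain ⟨y, hyP, hyK, hyu⟩ := maxIndep_inter_simpClique h.2.2.2.2.1 hP
    have hyK' : (↑y : V) ∈ H₁.verts ∩ H₂.verts := mem_restrictToSub.1 hyK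
    have h0 : ∀ b ∈ P, b ≠ y →
        (if h2 : (b : V) ∈ H₂.verts then ∑ v ∈ N₁ ↑b ⟨b.2, h2⟩, g ↑v else 0) = 0 := by
      intro b hbP hbney
      exact dif_neg (fun hb2 => hbney (hyu b hbP (mem_restrictToSub.2 ⟨b.2, hb2⟩)))
    have hstep : ∑ u ∈ P, (if h2 : (u : V) ∈ H₂.verts then ∑ v ∈ N₁ ↑u ⟨u.2, h2⟩, g ↑v else 0)
        = ∑ v ∈ N₁ ↑y hyK', g ↑v := by
      rw [Finset.sum_eq_single_of_mem y hyP h0, dif_pos hyK'.2]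
    have hPsum : ∑ u ∈ P, g ↑u = ∑ v ∈ N₁ ↑y hyK', g ↑v := claim₁ ↑y hyK' P hP hyP
    calc ∑ u ∈ P, f₁ u
        = ∑ u ∈ P, (g ↑u -
            (if h2 : (u : V) ∈ H₂.verts then ∑ v ∈ N₁ ↑u ⟨u.2, h2⟩, g ↑v else 0)) := by
          simp only [hf₁def]
      _ = (∑ u ∈ P, g ↑u) -
            ∑ u ∈ P, (if h2 : (u : V) ∈ H₂.verts then ∑ v ∈ N₁ ↑u ⟨u.2, h2⟩, g ↑v else 0) :=
          Finset.sum_sub_distrib _ _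
      _ = 0 := by rw [hstep, hPsum]; ring
  have key2 : ∀ P, IsMaxIndep H₂.coe P → ∑ u ∈ P, f₂ u = ∑ v ∈ M₀, g v := by
    intro P hP
    obtain ⟨y, hyP, hyK, hyu⟩ := maxIndep_inter_simpClique h.symm.2.2.2.2.1 hP
    have hyK0 : (↑y : V) ∈ H₂.verts ∩ H₁.verts := mem_restrictToSub.1 hyK
    have hyK' : (↑y : V) ∈ H₁.verts ∩ H₂.verts := ⟨hyK0.2, hyK0.1⟩
    have h0 : ∀ b ∈ P, b ≠ y →
        (if h1 : (b : V) ∈ H₁.verts then (∑ v ∈ N₁ ↑b ⟨h1, b.2⟩, g ↑v) - g ↑b else 0) = 0 := by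
      intro b hbP hbney
      exact dif_neg (fun hb1 => hbney (hyu b hbP (mem_restrictToSub.2 ⟨b.2, hb1⟩)))
    have hstep : ∑ u ∈ P,
        (if h1 : (u : V) ∈ H₁.verts then (∑ v ∈ N₁ ↑u ⟨h1, u.2⟩, g ↑v) - g ↑u else 0)
        = (∑ v ∈ N₁ ↑y hyK', g ↑v) - g ↑y := by
      rw [Finset.sum_eq_single_of_mem y hyP h0, dif_pos hyK'.1]
    have hPsum : ∑ u ∈ P, g ↑u = (∑ v ∈ M₀, g v) + g ↑y - ∑ v ∈ N₁ ↑y hyK', g ↑v :=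
      claim₂ ↑y hyK' P hP hyP
    calc ∑ u ∈ P, f₂ u
        = ∑ u ∈ P, (g ↑u +
            (if h1 : (u : V) ∈ H₁.verts then (∑ v ∈ N₁ ↑u ⟨h1, u.2⟩, g ↑v) - g ↑u else 0)) := by
          simp only [hf₂def]
      _ = (∑ u ∈ P, g ↑u) +
            ∑ u ∈ P, (if h1 : (u : V) ∈ H₁.verts then (∑ v ∈ N₁ ↑u ⟨h1, u.2⟩, g ↑v) - g ↑u
              else 0) := Finset.sum_add_distrib
      _ = ∑ v ∈ M₀, g v := by rw [hstep, hPsum]; ring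
  have hwcw1 : IsWCW H₁.coe f₁ := by
    intro s t hs ht
    rw [key1 s hs, key1 t ht]
  have hwcw2 : IsWCW H₂.coe f₂ := by
    intro s t hs ht
    rw [key2 s hs, key2 t ht]
  have hglue : glueFun H₁ H₂ f₁ f₂ = g := by
    funext v
    unfold glueFun
    by_cases h1 : v ∈ H₁.verts <;> by_cases h2 : v ∈ H₂.verts
    · rw [dif_pos h1, dif_pos h2]
      simp only [hf₁def, hf₂def]
      rw [dif_pos h2, dif_pos h1]
      ring
    · rw [dif_pos h1, dif_neg h2]
      simp only [hf₁def]
      rw [dif_neg h2]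
      ring
    · rw [dif_neg h1, dif_pos h2]
      simp only [hf₂def]
      rw [dif_neg h1]
      ring
    · exact absurd (h.mem_verts_total v) (by simp [h1, h2])
  exact ⟨(⟨f₁, hwcw1⟩, ⟨f₂, hwcw2⟩), Subtype.ext hglue⟩

end Surj
section Ker
variable {V : Type*} [Fintype V] {𝒢 : SimpleGraph V} {H₁ H₂ : 𝒢.Subgraph}

/-- The kernel of the gluing map is spanned by a single nonzero element. -/
lemma IsSCS.ker_span (h : IsSCS 𝒢 H₁ H₂) (F : Type*) [Field F] :
    ∃ e : wcSpace H₁.coe F × wcSpace H₂.coe F,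
      LinearMap.ker (psiMap h F) = Submodule.span F {e} ∧ e ≠ 0 := by
  -- a vertex of the overlap clique
  obtain ⟨x₀, hx₀K, -⟩ := h.2.2.2.2.2.2.2
  have hx₀ : x₀ ∈ H₁.verts ∩ H₂.verts := Set.mem_toFinset.1 hx₀K
  have hex1 : ∃ f : ↥H₁.verts → F, f = (fun (u : ↥H₁.verts) =>
      if (↑u : V) ∈ H₂.verts then (1 : F) else 0) := ⟨_, rfl⟩
  obtain ⟨e₁, he₁def⟩ := hex1
  have hex2 : ∃ f : ↥H₂.verts → F, f = (fun (u : ↥H₂.verts) =>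
      if (↑u : V) ∈ H₁.verts then (-1 : F) else 0) := ⟨_, rfl⟩
  obtain ⟨e₂, he₂def⟩ := hex2
  -- generic evaluation of sums of functions supported on the overlap clique
  have hsupp1 : ∀ (f : ↥H₁.verts → F), (∀ u : ↥H₁.verts, (↑u : V) ∉ H₂.verts → f u = 0) →
      ∀ P : Finset ↥H₁.verts, IsMaxIndep H₁.coe P →
      ∀ y ∈ P, (↑y : V) ∈ H₂.verts → ∑ u ∈ P, f u = f y := by
    intro f hf P hP y hyP hy2
    obtain ⟨z, hzP, hzK, hzu⟩ := maxIndep_inter_simpClique h.2.2.2.2.1 hP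
    have hyz : y = z := hzu y hyP (mem_restrictToSub.2 ⟨y.2, hy2⟩)
    subst hyz
    apply Finset.sum_eq_single_of_mem y hzP
    intro b hbP hbney
    by_cases hb2 : (↑b : V) ∈ H₂.verts
    · exact absurd (hzu b hbP (mem_restrictToSub.2 ⟨b.2, hb2⟩)) hbney
    · exact hf b hb2
  have hsupp2 : ∀ (f : ↥H₂.verts → F), (∀ u : ↥H₂.verts, (↑u : V) ∉ H₁.verts → f u = 0) →
      ∀ P : Finset ↥H₂.verts, IsMaxIndep H₂.coe P →
      ∀ y ∈ P, (↑y : V) ∈ H₁.verts → ∑ u ∈ P, f u = f y := by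
    intro f hf P hP y hyP hy1
    obtain ⟨z, hzP, hzK, hzu⟩ := maxIndep_inter_simpClique h.symm.2.2.2.2.1 hP
    have hyz : y = z := hzu y hyP (mem_restrictToSub.2 ⟨y.2, hy1⟩)
    subst hyz
    apply Finset.sum_eq_single_of_mem y hzP
    intro b hbP hbney
    by_cases hb1 : (↑b : V) ∈ H₁.verts
    · exact absurd (hzu b hbP (mem_restrictToSub.2 ⟨b.2, hb1⟩)) hbney
    · exact hf b hb1
  -- e₁ and e₂ are well-covered weightings
  have he₁supp : ∀ u : ↥H₁.verts, (↑u : V) ∉ H₂.verts → e₁ u = 0 := by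
    intro u hu; rw [he₁def]; exact if_neg hu
  have he₂supp : ∀ u : ↥H₂.verts, (↑u : V) ∉ H₁.verts → e₂ u = 0 := by
    intro u hu; rw [he₂def]; exact if_neg hu
  have hval1 : ∀ P : Finset ↥H₁.verts, IsMaxIndep H₁.coe P → ∑ u ∈ P, e₁ u = 1 := by
    intro P hP
    obtain ⟨z, hzP, hzK, hzu⟩ := maxIndep_inter_simpClique h.2.2.2.2.1 hP
    have hz2 : (↑z : V) ∈ H₂.verts := (mem_restrictToSub.1 hzK).2
    rw [hsupp1 e₁ he₁supp P hP z hzP hz2, he₁def]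
    exact if_pos hz2
  have hval2 : ∀ P : Finset ↥H₂.verts, IsMaxIndep H₂.coe P → ∑ u ∈ P, e₂ u = -1 := by
    intro P hP
    obtain ⟨z, hzP, hzK, hzu⟩ := maxIndep_inter_simpClique h.symm.2.2.2.2.1 hP
    have hz1 : (↑z : V) ∈ H₁.verts := (mem_restrictToSub.1 hzK).2
    rw [hsupp2 e₂ he₂supp P hP z hzP hz1, he₂def]
    exact if_pos hz1
  have hwcw1 : IsWCW H₁.coe e₁ := by
    intro s t hs ht; rw [hval1 s hs, hval1 t ht]
  have hwcw2 : IsWCW H₂.coe e₂ := by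
    intro s t hs ht; rw [hval2 s hs, hval2 t ht]
  refine ⟨(⟨e₁, hwcw1⟩, ⟨e₂, hwcw2⟩), ?_, ?_⟩
  · -- kernel = span
    apply le_antisymm
    · -- ker ≤ span
      intro p hp
      have hglue0 : glueFun H₁ H₂ p.1.val p.2.val = 0 :=
        congrArg Subtype.val (LinearMap.mem_ker.1 hp)
      have hoff1 : ∀ u : ↥H₁.verts, (↑u : V) ∉ H₂.verts → (↑p.1 : ↥H₁.verts → F) u = 0 := by
        intro u hu2
        have hv := congrFun hglue0 ↑u
        unfold glueFun at hv
        rw [dif_pos u.2, dif_neg hu2] at hv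
        simpa using hv
      have hoff2 : ∀ u : ↥H₂.verts, (↑u : V) ∉ H₁.verts → (↑p.2 : ↥H₂.verts → F) u = 0 := by
        intro u hu1
        have hv := congrFun hglue0 ↑u
        unfold glueFun at hv
        rw [dif_neg hu1, dif_pos u.2] at hv
        simpa using hv
      have hsumK : ∀ (v : V) (h1 : v ∈ H₁.verts) (h2 : v ∈ H₂.verts),
          (↑p.1 : ↥H₁.verts → F) ⟨v, h1⟩ + (↑p.2 : ↥H₂.verts → F) ⟨v, h2⟩ = 0 := by
        intro v h1 h2
        have hv := congrFun hglue0 v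
        unfold glueFun at hv
        rw [dif_pos h1, dif_pos h2] at hv
        exact hv
      have hconst1 : ∀ u : ↥H₁.verts, (↑u : V) ∈ H₂.verts →
          (↑p.1 : ↥H₁.verts → F) u = (↑p.1 : ↥H₁.verts → F) ⟨x₀, hx₀.1⟩ := by
        intro u hu2
        obtain ⟨P, hP, hPsub⟩ := exists_maxIndep_containing (G := H₁.coe)
          ({u} : Finset ↥H₁.verts) (isIndep_singleton _)
        obtain ⟨P₀, hP₀, hP₀sub⟩ := exists_maxIndep_containing (G := H₁.coe)
          ({⟨x₀, hx₀.1⟩} : Finset ↥H₁.verts) (isIndep_singleton _)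
        have h1 := hsupp1 _ hoff1 P hP u (hPsub (Finset.mem_singleton_self _)) hu2
        have h2 := hsupp1 _ hoff1 P₀ hP₀ ⟨x₀, hx₀.1⟩ (hP₀sub (Finset.mem_singleton_self _)) hx₀.2
        have h3 : ∑ x ∈ P, (↑p.1 : ↥H₁.verts → F) x = ∑ x ∈ P₀, (↑p.1 : ↥H₁.verts → F) x :=
          p.1.2 _ _ hP hP₀
        rw [h1, h2] at h3
        exact h3
      apply Submodule.mem_span_singleton.2
      refine ⟨(↑p.1 : ↥H₁.verts → F) ⟨x₀, hx₀.1⟩, ?_⟩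
      have hc1 : (↑p.1 : ↥H₁.verts → F) ⟨x₀, hx₀.1⟩ • e₁ = ↑p.1 := by
        funext u
        by_cases hu2 : (↑u : V) ∈ H₂.verts
        · rw [Pi.smul_apply, he₁def]
          simp only [if_pos hu2, smul_eq_mul, mul_one]
          exact (hconst1 u hu2).symm
        · rw [Pi.smul_apply, he₁def]
          simp only [if_neg hu2, smul_eq_mul, mul_zero]
          exact (hoff1 u hu2).symm
      have hc2 : (↑p.1 : ↥H₁.verts → F) ⟨x₀, hx₀.1⟩ • e₂ = ↑p.2 := by
        funext u
        by_cases hu1 : (↑u : V) ∈ H₁.verts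
        · rw [Pi.smul_apply, he₂def]
          simp only [if_pos hu1, smul_eq_mul, mul_neg, mul_one]
          have := hsumK ↑u hu1 u.2
          have hcq := hconst1 ⟨↑u, hu1⟩ u.2
          linear_combination -this + hcq
        · rw [Pi.smul_apply, he₂def]
          simp only [if_neg hu1, smul_eq_mul, mul_zero]
          exact (hoff2 u hu1).symm
      apply Prod.ext
      · apply Subtype.ext
        simpa using hc1
      · apply Subtype.ext
        simpa using hc2
    · -- span ≤ ker
      rw [Submodule.span_singleton_le_iff_mem]
      apply LinearMap.mem_ker.2
      apply Subtype.ext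
      show glueFun H₁ H₂ e₁ e₂ = 0
      funext v
      unfold glueFun
      by_cases h1 : v ∈ H₁.verts <;> by_cases h2 : v ∈ H₂.verts
      · rw [dif_pos h1, dif_pos h2, he₁def, he₂def]
        simp [h1, h2]
      · rw [dif_pos h1, dif_neg h2, he₁def]
        simp [h2]
      · rw [dif_neg h1, dif_pos h2, he₂def]
        simp [h1]
      · rw [dif_neg h1, dif_neg h2]
        simp
  · -- nonzero
    intro h0
    have h1 : e₁ = 0 := by
      have := congrArg Prod.fst h0
      exact congrArg Subtype.val this
    have := congrFun h1 ⟨x₀, hx₀.1⟩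
    rw [he₁def] at this
    simp only [if_pos hx₀.2, Pi.zero_apply] at this
    exact one_ne_zero this

end Ker


/-- For a simplicial clique sum `𝒢` of `G₁` and `G₂` and any field `F`,
`wcdim(𝒢, F) = wcdim(G₁, F) + wcdim(G₂, F) - 1` (stated additively to avoid truncated
natural subtraction). -/
theorem scs_wcdim {V : Type*} [Fintype V] (𝒢 : SimpleGraph V)
    (hconn : 𝒢.Connected) (H₁ H₂ : 𝒢.Subgraph) (hscs : IsSCS 𝒢 H₁ H₂)
    (F : Type*) [Field F] :
    wcdim 𝒢 F + 1 = wcdim H₁.coe F + wcdim H₂.coe F := by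
  classical
  have hrank := LinearMap.finrank_range_add_finrank_ker (psiMap hscs F)
  have hrange : LinearMap.range (psiMap hscs F) = ⊤ :=
    LinearMap.range_eq_top.2 (hscs.psiMap_surjective F)
  rw [hrange, finrank_top] at hrank
  obtain ⟨e, hker, hne⟩ := hscs.ker_span F
  rw [hker, finrank_span_singleton hne] at hrank
  have hprod : Module.finrank F (wcSpace H₁.coe F × wcSpace H₂.coe F)
      = Module.finrank F (wcSpace H₁.coe F) + Module.finrank F (wcSpace H₂.coe F) :=
    Module.finrank_prod
  unfold wcdim
  rw [← hprod]
  exact hrank
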